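/- For each fixed m ≥ 0, the limit as A → ∞ of (2/A)·(φ_m(A) − A^{3/2}/(6√π)) equals m. -/

import Mathlib

/-- Area of the coordinate sphere of radius `r` in the Schwarzschild manifold of
mass `m`, in isotropic coordinates: `A_m(r) = 4π r² (1 + m/(2r))⁴`. -/
noncomputable def schwA (m r : ℝ) : ℝ := 4 * Real.pi * r ^ 2 * (1 + m / (2 * r)) ^ 4

/-- Volume enclosed between the horizon `r = m/2` and the coordinate sphere of radius `r`
in the Schwarzschild manifold of mass `m`:
`V_m(r) = ∫_{m/2}^r 4π ρ² (1 + m/(2ρ))⁶ dρ`. -/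
noncomputable def schwV (m r : ℝ) : ℝ :=
  ∫ ρ in (m / 2)..r, 4 * Real.pi * ρ ^ 2 * (1 + m / (2 * ρ)) ^ 6

/-- The Schwarzschild isoperimetric profile of mass `m`: `φ_m = V_m ∘ A_m⁻¹`, where
`A_m⁻¹ : [16πm², ∞) → [m/2, ∞)` is the inverse of the (bijective, strictly increasing)
area function `A_m : [m/2, ∞) → [16πm², ∞)`. -/
noncomputable def schwPhi (m A : ℝ) : ℝ :=
  schwV m (Function.invFunOn (schwA m) (Set.Ici (m / 2)) A)

open Real Filter Set intervalIntegral

noncomputable def Ffun (a ρ : ℝ) : ℝ :=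
  4 * Real.pi * (ρ^3/3 + 3*a*ρ^2 + 15*a^2*ρ + 20*a^3*Real.log ρ
    - 15*a^4/ρ - 3*a^5/ρ^2 - a^6/(3*ρ^3))

noncomputable def Hfun (a r : ℝ) : ℝ :=
  2*a + 20*a^2/r + 40*a^3*(Real.log r - Real.log a)/r^2 - (40*a^3/3)/r^2
    - 40*a^4/r^3 - 10*a^5/r^4 - (4*a^6/3)/r^5

lemma Fderiv (a x : ℝ) (hx : 0 < x) :
    HasDerivAt (Ffun a) (4*Real.pi*x^2*(1 + a/x)^6) x := by
  have h1 : HasDerivAt (fun ρ : ℝ => ρ^3/3) ((3:ℕ)*x^2/3) x := (hasDerivAt_pow 3 x).div_const 3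
  have h2 : HasDerivAt (fun ρ : ℝ => 3*a*ρ^2) (3*a*((2:ℕ)*x^1)) x :=
    (hasDerivAt_pow 2 x).const_mul (3*a)
  have h3 : HasDerivAt (fun ρ : ℝ => 15*a^2*ρ) (15*a^2*1) x :=
    (hasDerivAt_id' x).const_mul (15*a^2)
  have h4 : HasDerivAt (fun ρ : ℝ => 20*a^3*Real.log ρ) (20*a^3*x⁻¹) x :=
    (Real.hasDerivAt_log hx.ne').const_mul (20*a^3)
  have h5 : HasDerivAt (fun ρ : ℝ => 15*a^4/ρ) ((0*x - 15*a^4*1)/x^2) x :=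
    (hasDerivAt_const x (15*a^4)).div (hasDerivAt_id' x) hx.ne'
  have h6 : HasDerivAt (fun ρ : ℝ => 3*a^5/ρ^2) ((0*x^2 - 3*a^5*((2:ℕ)*x^1))/(x^2)^2) x :=
    (hasDerivAt_const x (3*a^5)).div (hasDerivAt_pow 2 x) (pow_ne_zero 2 hx.ne')
  have h7 : HasDerivAt (fun ρ : ℝ => a^6/(3*ρ^3)) ((0*(3*x^3) - a^6*(3*((3:ℕ)*x^2)))/(3*x^3)^2) x :=
    (hasDerivAt_const x (a^6)).div ((hasDerivAt_pow 3 x).const_mul 3)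
      (by positivity)
  have H := ((((((h1.add h2).add h3).add h4).sub h5).sub h6).sub h7).const_mul (4*Real.pi)
  refine H.congr_deriv ?_
  have hx0 : x ≠ 0 := hx.ne'
  push_cast
  field_simp
  ring

lemma sq_rpow_threehalves (s : ℝ) (hs : 0 ≤ s) : (s^2)^((3:ℝ)/2) = s^3 := by
  rw [← Real.rpow_natCast s 2, ← Real.rpow_mul hs,
    show ((2:ℕ):ℝ) * ((3:ℝ)/2) = ((3:ℕ):ℝ) by norm_num, Real.rpow_natCast]

lemma sqrtpi_cube (u : ℝ) :
    (2*Real.sqrt Real.pi*u)^3/(6*Real.sqrt Real.pi) = 4*Real.pi*u^3/3 := by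
  have h0 : Real.sqrt Real.pi ≠ 0 := (Real.sqrt_pos.mpr Real.pi_pos).ne'
  have h3 : Real.sqrt Real.pi ^ 3 = Real.pi * Real.sqrt Real.pi := by
    rw [pow_succ, Real.sq_sqrt Real.pi_pos.le]
  rw [mul_pow, mul_pow, h3]
  field_simp
  ring

lemma schwA_eq (m t : ℝ) (ht : t ≠ 0) : schwA m t = 4*Real.pi*((t+m/2)^2/t)^2 := by
  simp only [schwA]
  field_simp

lemma schwA_rpow (m r : ℝ) (hr : 0 < r) :
    (schwA m r) ^ ((3:ℝ)/2) / (6*Real.sqrt Real.pi) = 4*Real.pi*((r+m/2)^2/r)^3/3 := by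
  set u : ℝ := (r+m/2)^2/r with hu
  have hu0 : 0 ≤ u := div_nonneg (sq_nonneg _) hr.le
  have hs : (0:ℝ) ≤ 2*Real.sqrt Real.pi*u :=
    mul_nonneg (mul_nonneg (by norm_num) (Real.sqrt_nonneg _)) hu0
  have h1 : schwA m r = (2*Real.sqrt Real.pi*u)^2 := by
    rw [schwA_eq m r hr.ne', mul_pow, mul_pow, Real.sq_sqrt Real.pi_pos.le]
    ring
  rw [h1, sq_rpow_threehalves _ hs, sqrtpi_cube]

lemma schwV_eq (m r : ℝ) (hm : 0 < m) (har : m/2 ≤ r) :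
    schwV m r = Ffun (m/2) r - Ffun (m/2) (m/2) := by
  have ha : 0 < m/2 := half_pos hm
  have hderiv : ∀ x ∈ Set.uIcc (m/2) r,
      HasDerivAt (Ffun (m/2)) (4*Real.pi*x^2*(1 + m/(2*x))^6) x := by
    intro x hx
    rw [Set.uIcc_of_le har] at hx
    have hx0 : 0 < x := lt_of_lt_of_le ha hx.1
    have := Fderiv (m/2) x hx0
    simpa [div_div] using this
  have hcont : ContinuousOn (fun ρ : ℝ => 4*Real.pi*ρ^2*(1 + m/(2*ρ))^6) (Set.uIcc (m/2) r) := by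
    apply ContinuousOn.mul
    · exact (continuous_const.mul (continuous_pow 2)).continuousOn
    · apply ContinuousOn.pow
      apply continuousOn_const.add
      apply continuousOn_const.div (continuous_const.mul continuous_id).continuousOn
      intro x hx
      rw [Set.uIcc_of_le har] at hx
      have hx0 : 0 < x := lt_of_lt_of_le ha hx.1
      exact mul_ne_zero two_ne_zero hx0.ne'
  have hint : IntervalIntegrable (fun ρ : ℝ => 4*Real.pi*ρ^2*(1 + m/(2*ρ))^6)
      MeasureTheory.volume (m/2) r := hcont.intervalIntegrable
  exact intervalIntegral.integral_eq_sub_of_hasDerivAt hderiv hint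

lemma key_identity (m r : ℝ) (hm : 0 < m) (har : m/2 ≤ r) :
    2/(schwA m r) * (schwV m r - (schwA m r)^((3:ℝ)/2)/(6*Real.sqrt Real.pi))
      = (r/(r + m/2))^4 * Hfun (m/2) r := by
  have ha : 0 < m/2 := half_pos hm
  have hr : 0 < r := lt_of_lt_of_le ha har
  have hra : 0 < r + m/2 := by linarith
  rw [schwV_eq m r hm har, schwA_rpow m r hr, schwA_eq m r hr.ne']
  simp only [Ffun, Hfun]
  have hπ : Real.pi ≠ 0 := Real.pi_pos.ne'
  field_simp
  ring
lemma schwA_strictMonoOn (m : ℝ) (hm : 0 ≤ m) : StrictMonoOn (schwA m) (Set.Ici (m/2)) := by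
  intro x hx y hy hxy
  simp only [Set.mem_Ici] at hx hy
  have ha : (0:ℝ) ≤ m/2 := by linarith
  have hy0 : 0 < y := lt_of_le_of_lt (ha.trans hx) hxy
  rcases eq_or_lt_of_le (ha.trans hx) with h0 | hx0
  · have hm0 : m = 0 := by
      have : m/2 ≤ 0 := by rw [h0]; exact hx
      linarith
    subst hm0
    rw [← h0]
    simp [schwA]
    positivity
  · rw [schwA_eq m x hx0.ne', schwA_eq m y hy0.ne']
    have hxy2 : m^2/4 < x*y := by nlinarith
    have key2 : (x+m/2)^2*y < (y+m/2)^2*x := by nlinarith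
    have key3 : (x+m/2)^2/x < (y+m/2)^2/y := (div_lt_div_iff₀ hx0 hy0).mpr key2
    have key4 : ((x+m/2)^2/x)^2 < ((y+m/2)^2/y)^2 :=
      pow_lt_pow_left₀ key3 (by positivity) two_ne_zero
    have := mul_lt_mul_of_pos_left key4 (show (0:ℝ) < 4*Real.pi by positivity)
    exact this
lemma schwA_tendsto (m : ℝ) (hm : 0 ≤ m) : Tendsto (schwA m) atTop atTop := by
  refine tendsto_atTop_mono' atTop ?_
    ((tendsto_pow_atTop (two_ne_zero)).const_mul_atTop (show (0:ℝ) < 4*Real.pi by positivity))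
  filter_upwards [eventually_gt_atTop 0] with r hr
  have h1 : (0:ℝ) ≤ m/(2*r) := by positivity
  have h2 : (1:ℝ) ≤ (1 + m/(2*r))^4 := one_le_pow₀ (by linarith)
  calc 4*Real.pi*r^2 = 4*Real.pi*r^2*1 := by ring
  _ ≤ schwA m r := by
      unfold schwA
      exact mul_le_mul_of_nonneg_left h2 (by positivity)

lemma exists_preimage (m : ℝ) (hm : 0 < m) (A : ℝ) (hA : schwA m (m/2) ≤ A) :
    ∃ r ∈ Set.Ici (m/2), schwA m r = A := by
  obtain ⟨R, hR1, hR2⟩ :=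
    (((schwA_tendsto m hm.le).eventually_ge_atTop A).and (eventually_ge_atTop (m/2))).exists
  have hcont : ContinuousOn (schwA m) (Set.Icc (m/2) R) := by
    show ContinuousOn (fun r : ℝ => 4*Real.pi*r^2*(1 + m/(2*r))^4) _
    apply ContinuousOn.mul
    · exact (continuous_const.mul (continuous_pow 2)).continuousOn
    · apply ContinuousOn.pow
      apply continuousOn_const.add
      apply continuousOn_const.div (continuous_const.mul continuous_id).continuousOn
      intro x hx
      have : 0 < x := lt_of_lt_of_le (half_pos hm) hx.1
      exact mul_ne_zero two_ne_zero this.ne'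
  obtain ⟨r, hr, hr2⟩ := intermediate_value_Icc hR2 hcont ⟨hA, hR1⟩
  exact ⟨r, hr.1, hr2⟩

lemma Htendsto (a : ℝ) :
    Tendsto (fun r : ℝ => (r/(r+a))^4 * Hfun a r) atTop (nhds (2*a)) := by
  have hid : Tendsto (fun r : ℝ => r) atTop atTop := tendsto_id
  have hadd : Tendsto (fun r : ℝ => r + a) atTop atTop := tendsto_atTop_add_const_right _ a hid
  have hfrac : Tendsto (fun r : ℝ => a/(r+a)) atTop (nhds 0) :=
    tendsto_const_nhds.div_atTop hadd
  have hratio : Tendsto (fun r : ℝ => r/(r+a)) atTop (nhds 1) := by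
    apply Tendsto.congr' (f₁ := fun r : ℝ => 1 - a/(r+a))
    · filter_upwards [(tendsto_atTop.mp hadd) 1] with r hr
      have : r + a ≠ 0 := by linarith
      field_simp
      ring
    · simpa using tendsto_const_nhds.sub hfrac
  have hratio4 : Tendsto (fun r : ℝ => (r/(r+a))^4) atTop (nhds 1) := by
    simpa using hratio.pow 4
  have hinv : ∀ n : ℕ, n ≠ 0 → ∀ c : ℝ, Tendsto (fun r : ℝ => c/r^n) atTop (nhds 0) :=
    fun n hn c => tendsto_const_nhds.div_atTop (tendsto_pow_atTop hn)
  have hlog : Tendsto (fun r : ℝ => Real.log r / r) atTop (nhds 0) :=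
    Real.isLittleO_log_id_atTop.tendsto_div_nhds_zero
  have hlog2 : Tendsto (fun r : ℝ => 40*a^3*(Real.log r)/r^2) atTop (nhds 0) := by
    have : (fun r : ℝ => 40*a^3*(Real.log r)/r^2)
        = fun r : ℝ => (40*a^3) * ((Real.log r / r) * (1/r)) := by
      funext r; ring
    rw [this]
    simpa using (tendsto_const_nhds.mul (hlog.mul (hinv 1 one_ne_zero 1)))
  have hH : Tendsto (fun r : ℝ => Hfun a r) atTop (nhds (2*a)) := by
    have hcongr : (fun r : ℝ => Hfun a r) = fun r : ℝ =>
        2*a + 20*a^2/r + (40*a^3*(Real.log r)/r^2 - (40*a^3*Real.log a)/r^2) - (40*a^3/3)/r^2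
          - 40*a^4/r^3 - 10*a^5/r^4 - (4*a^6/3)/r^5 := by
      funext r; simp only [Hfun]; ring
    rw [hcongr]
    have := ((((((tendsto_const_nhds (x := 2*a) (f := atTop)).add
      (hinv 1 one_ne_zero (20*a^2))).add
      (hlog2.sub (hinv 2 two_ne_zero (40*a^3*Real.log a)))).sub
      (hinv 2 two_ne_zero (40*a^3/3))).sub
      (hinv 3 three_ne_zero (40*a^4))).sub
      (hinv 4 four_ne_zero (10*a^5))).sub
      (hinv 5 (by norm_num) (4*a^6/3))
    simpa using this
  simpa using hratio4.mul hH
/-- For fixed `m ≥ 0`, `(2/A)(φ_m(A) − A^{3/2}/(6√π)) → m` as `A → ∞`. -/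
theorem schwPhi_mass_limit (m : ℝ) (hm : 0 ≤ m) :
    Filter.Tendsto
      (fun A : ℝ => 2 / A * (schwPhi m A - A ^ ((3 : ℝ) / 2) / (6 * Real.sqrt Real.pi)))
      Filter.atTop (nhds m) := by
  rcases eq_or_lt_of_le hm with hm0 | hm0
  · -- m = 0
    subst hm0
    apply Tendsto.congr' (f₁ := fun _ : ℝ => (0:ℝ))
    · filter_upwards [eventually_gt_atTop 0] with A hA
      set r := Function.invFunOn (schwA 0) (Set.Ici ((0:ℝ)/2)) A with hrdef
      have hex : ∃ x ∈ Set.Ici ((0:ℝ)/2), schwA 0 x = A := by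
        refine ⟨Real.sqrt (A/(4*Real.pi)), by simp [Real.sqrt_nonneg], ?_⟩
        simp only [schwA, zero_div, add_zero, one_pow, mul_one]
        rw [Real.sq_sqrt (by positivity)]
        field_simp
      have hrA : schwA 0 r = A := Function.invFunOn_eq hex
      have hrmem : r ∈ Set.Ici ((0:ℝ)/2) := Function.invFunOn_mem hex
      have hr0 : 0 ≤ r := by simpa using hrmem
      have hV : schwV 0 r = 4*Real.pi*(r^3/3) := by
        simp only [schwV, zero_div, add_zero, one_pow, mul_one]
        rw [intervalIntegral.integral_const_mul, integral_pow]
        norm_num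
      have hA32 : A ^ ((3:ℝ)/2) / (6*Real.sqrt Real.pi) = 4*Real.pi*r^3/3 := by
        have h1 : A = (2*Real.sqrt Real.pi*r)^2 := by
          rw [← hrA]
          simp only [schwA, zero_div, add_zero, one_pow, mul_one]
          rw [mul_pow, mul_pow, Real.sq_sqrt Real.pi_pos.le]
          ring
        rw [h1, sq_rpow_threehalves _ (by positivity), sqrtpi_cube]
      have hphi : schwPhi 0 A = schwV 0 r := rfl
      rw [hphi, hV, hA32]
      ring
    · exact tendsto_const_nhds
  · -- m > 0
    have ha : 0 < m/2 := half_pos hm0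
    set rf : ℝ → ℝ := fun A => Function.invFunOn (schwA m) (Set.Ici (m/2)) A with hrf
    have hprops : ∀ A : ℝ, schwA m (m/2) ≤ A → schwA m (rf A) = A ∧ rf A ∈ Set.Ici (m/2) :=
      fun A hA => ⟨Function.invFunOn_eq (exists_preimage m hm0 A hA),
        Function.invFunOn_mem (exists_preimage m hm0 A hA)⟩
    have htend : Tendsto rf atTop atTop := by
      rw [tendsto_atTop]
      intro b
      set c := max b (m/2) with hc
      filter_upwards [eventually_ge_atTop (max (schwA m c + 1) (schwA m (m/2)))] with A hA
      have hA1 : schwA m (m/2) ≤ A := le_trans (le_max_right _ _) hA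
      obtain ⟨heq, hmem⟩ := hprops A hA1
      by_contra hcon
      push_neg at hcon
      have hrc : rf A ≤ c := le_trans hcon.le (le_max_left _ _)
      have hcmem : c ∈ Set.Ici (m/2) := Set.mem_Ici.mpr (le_max_right _ _)
      have := (schwA_strictMonoOn m hm0.le).monotoneOn hmem hcmem hrc
      rw [heq] at this
      have := le_trans (le_max_left (schwA m c + 1) (schwA m (m/2))) hA
      linarith
    apply Tendsto.congr' (f₁ := fun A => (rf A/(rf A + m/2))^4 * Hfun (m/2) (rf A))
    · filter_upwards [eventually_ge_atTop (schwA m (m/2))] with A hA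
      obtain ⟨heq, hmem⟩ := hprops A hA
      have hid := key_identity m (rf A) hm0 hmem
      rw [heq] at hid
      rw [← hid]
      rfl
    · have h := (Htendsto (m/2)).comp htend
      rw [show 2*(m/2) = m by ring] at h
      exact h
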